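/- Every piecewise linear KAN f: ℝⁿ → ℝ (a composition of KAN layers with piecewise linear activation functions, each with finitely many pieces) equals a ReLU network: there exist affine maps A₀, ..., A_L such that f(x) = (A_L ∘ ReLU ∘ A_{L−1} ∘ ... ∘ ReLU ∘ A₀)(x) for all x ∈ ℝⁿ. -/
import Mathlib


/-- Componentwise ReLU. -/
def reluV {n : ℕ} (x : Fin n → ℝ) : Fin n → ℝ := fun i => max (x i) 0

/-- A function φ : ℝ → ℝ is piecewise linear with at most k pieces. -/
def PWL1 (k : ℕ) (φ : ℝ → ℝ) : Prop :=
  ∃ P : Fin k → Set ℝ, (∀ x, ∃ i, x ∈ P i) ∧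
    ∀ i, ∃ a c : ℝ, ∀ x ∈ P i, φ x = a * x + c

/-- A single KAN layer: x ↦ (Σ_p φ_p^q(x_p))_q. -/
def kanLayer {n m : ℕ} (φ : Fin m → Fin n → ℝ → ℝ) (x : Fin n → ℝ) : Fin m → ℝ :=
  fun q => ∑ p, φ q p (x p)

/-- `IsKAN Q n m f L` : f is a KAN with L layers all of whose activation functions satisfy Q. -/
inductive IsKAN (Q : (ℝ → ℝ) → Prop) : (n m : ℕ) → ((Fin n → ℝ) → (Fin m → ℝ)) → ℕ → Prop
  | layer {n m : ℕ} (φ : Fin m → Fin n → ℝ → ℝ) (h : ∀ q p, Q (φ q p)) :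
      IsKAN Q n m (kanLayer φ) 1
  | comp {n m l L : ℕ} {f : (Fin n → ℝ) → (Fin m → ℝ)} (hf : IsKAN Q n m f L)
      (φ : Fin l → Fin m → ℝ → ℝ) (h : ∀ q p, Q (φ q p)) :
      IsKAN Q n l (fun x => kanLayer φ (f x)) (L + 1)

/-- `IsReLUNet n m g L` : g is a ReLU network with L affine layers (ReLU between consecutive
affine layers, affine output layer). -/
inductive IsReLUNet : (n m : ℕ) → ((Fin n → ℝ) → (Fin m → ℝ)) → ℕ → Prop
  | affine {n m : ℕ} (W : Matrix (Fin m) (Fin n) ℝ) (b : Fin m → ℝ) :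
      IsReLUNet n m (fun x => W.mulVec x + b) 1
  | comp {n m l L : ℕ} {f : (Fin n → ℝ) → (Fin m → ℝ)} (hf : IsReLUNet n m f L)
      (W : Matrix (Fin l) (Fin m) ℝ) (b : Fin l → ℝ) :
      IsReLUNet n l (fun x => W.mulVec (reluV (f x)) + b) (L + 1)


open Set

/-- representation predicate: φ is an affine function plus a finite sum of ReLU terms. -/
def RepF (φ : ℝ → ℝ) : Prop :=
  ∃ (N : ℕ) (a c : ℝ) (d s : Fin N → ℝ),
    ∀ x, φ x = a * x + c + ∑ j, d j * max (x - s j) 0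

lemma affine_eq_of_two {A C A' C' u v : ℝ} (huv : u ≠ v)
    (hu : A * u + C = A' * u + C') (hv : A * v + C = A' * v + C') :
    A = A' ∧ C = C' := by
  have h1 : (A - A') * (u - v) = 0 := by linear_combination hu - hv
  have hA : A = A' := by
    rcases mul_eq_zero.1 h1 with h | h
    · linarith
    · exact absurd (by linarith : u = v) huv
  exact ⟨hA, by rw [hA] at hu; linarith⟩

lemma sel_affine_on_preconnected {k : ℕ} (a c : Fin k → ℝ) (φ : ℝ → ℝ)
    (hφ : Continuous φ) (sel : ∀ x, ∃ i, φ x = a i * x + c i)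
    (I : Set ℝ) (hI : IsPreconnected I)
    (hnc : ∀ x ∈ I, ∀ i j, a i * x + c i = a j * x + c j → a i = a j ∧ c i = c j) :
    ∃ A C, ∀ x ∈ I, φ x = A * x + C := by
  rcases I.eq_empty_or_nonempty with rfl | ⟨x0, hx0⟩
  · exact ⟨0, 0, by simp⟩
  obtain ⟨i0, hi0⟩ := sel x0
  refine ⟨a i0, c i0, ?_⟩
  set U : Set ℝ := {x | φ x ≠ a i0 * x + c i0} with hUdef
  set V : Set ℝ := ⋂ j, {x | (a j = a i0 ∧ c j = c i0) ∨ φ x ≠ a j * x + c j} with hVdef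
  have hUopen : IsOpen U := isOpen_ne_fun hφ (by continuity)
  have hVopen : IsOpen V := by
    apply isOpen_iInter_of_finite
    intro j
    by_cases hj : a j = a i0 ∧ c j = c i0
    · have : {x : ℝ | (a j = a i0 ∧ c j = c i0) ∨ φ x ≠ a j * x + c j} = univ := by
        ext x; simp [hj]
      rw [this]; exact isOpen_univ
    · have : {x : ℝ | (a j = a i0 ∧ c j = c i0) ∨ φ x ≠ a j * x + c j}
          = {x | φ x ≠ a j * x + c j} := by ext x; simp [hj]
      rw [this]; exact isOpen_ne_fun hφ (by continuity)
  have hcover : I ⊆ U ∪ V := by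
    intro x hx
    obtain ⟨i, hi⟩ := sel x
    by_cases hpair : a i = a i0 ∧ c i = c i0
    · right
      refine mem_iInter.2 fun j => ?_
      by_cases hj : a j = a i0 ∧ c j = c i0
      · exact Or.inl hj
      · refine Or.inr fun hφj => hj ?_
        have : a i * x + c i = a j * x + c j := by rw [← hi, hφj]
        obtain ⟨h1, h2⟩ := hnc x hx i j this
        exact ⟨hpair.1 ▸ h1 ▸ rfl, hpair.2 ▸ h2 ▸ rfl⟩
    · left
      intro hφ0
      have : a i * x + c i = a i0 * x + c i0 := by rw [← hi, hφ0]
      exact hpair (hnc x hx i i0 this)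
  have hdisj : I ∩ (U ∩ V) = ∅ := by
    ext x
    simp only [mem_inter_iff, mem_empty_iff_false, iff_false]
    rintro ⟨hxI, hxU, hxV⟩
    obtain ⟨i, hi⟩ := sel x
    have hVi := mem_iInter.1 hxV i
    rcases hVi with hpair | hne
    · exact hxU (by rw [hi, hpair.1, hpair.2])
    · exact hne hi
  have hx0V : x0 ∈ V := by
    refine mem_iInter.2 fun j => ?_
    by_cases hj : a j = a i0 ∧ c j = c i0
    · exact Or.inl hj
    · refine Or.inr fun hφj => hj ?_
      have : a j * x0 + c j = a i0 * x0 + c i0 := by rw [← hφj, hi0]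
      obtain ⟨h1, h2⟩ := hnc x0 hx0 j i0 this
      exact ⟨h1, h2⟩
  intro x hx
  by_contra hne
  have hIU : (I ∩ U).Nonempty := ⟨x, hx, hne⟩
  have hIV : (I ∩ V).Nonempty := ⟨x0, hx0, hx0V⟩
  have := hI U V hUopen hVopen hcover hIU hIV
  rw [hdisj] at this
  exact this.ne_empty rfl

lemma rep_of : ∀ (n : ℕ) (S : Finset ℝ), S.card = n → ∀ φ : ℝ → ℝ, Continuous φ →
    (∀ I : Set ℝ, I.OrdConnected → (∀ x ∈ I, x ∉ S) → ∃ A C, ∀ x ∈ I, φ x = A * x + C) →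
    RepF φ := by
  intro n
  induction n with
  | zero =>
    intro S hS φ hc h
    obtain ⟨A, C, hAC⟩ := h univ ordConnected_univ
      (fun x _ hx => by simp [Finset.card_eq_zero.1 hS] at hx)
    exact ⟨0, A, C, Fin.elim0, Fin.elim0, fun x => by simp [hAC x (mem_univ x)]⟩
  | succ n ih =>
    intro S hS φ hc h
    have hSne : S.Nonempty := Finset.card_pos.1 (by omega)
    set s := S.max' hSne with hsdef
    have hsmem : s ∈ S := S.max'_mem hSne
    -- pick t < s with Ioo t s disjoint from S
    obtain ⟨t, ht, htS⟩ : ∃ t, t < s ∧ ∀ x ∈ Ioo t s, x ∉ S := by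
      set T := S.filter (· < s) with hT
      by_cases hTne : T.Nonempty
      · refine ⟨T.max' hTne, (Finset.mem_filter.1 (T.max'_mem hTne)).2, ?_⟩
        intro x hx hxS
        have : x ∈ T := Finset.mem_filter.2 ⟨hxS, hx.2⟩
        exact absurd (T.le_max' x this) (not_le.2 hx.1)
      · refine ⟨s - 1, by linarith, ?_⟩
        intro x hx hxS
        exact hTne ⟨x, Finset.mem_filter.2 ⟨hxS, hx.2⟩⟩
    obtain ⟨a0, c0, h0⟩ := h (Ioo t s) Set.ordConnected_Ioo htS
    obtain ⟨a1, c1, h1⟩ := h (Ioi s) Set.ordConnected_Ioi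
      (fun x hx hxS => absurd (S.le_max' x hxS) (not_le.2 hx))
    have hclos0 : φ s = a0 * s + c0 := by
      have heq : EqOn φ (fun x => a0 * x + c0) (Ioo t s) := fun x hx => h0 x hx
      have := heq.closure hc ((continuous_const.mul continuous_id).add continuous_const)
      have hs : s ∈ closure (Ioo t s) := by
        rw [closure_Ioo (ne_of_lt ht)]; exact ⟨le_of_lt ht, le_refl s⟩
      exact this hs
    have hclos1 : φ s = a1 * s + c1 := by
      have heq : EqOn φ (fun x => a1 * x + c1) (Ioi s) := fun x hx => h1 x hx
      have := heq.closure hc ((continuous_const.mul continuous_id).add continuous_const)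
      have hs : s ∈ closure (Ioi s) := by rw [closure_Ioi]; exact le_refl s
      exact this hs
    set ψ : ℝ → ℝ := fun x => φ (min x s) + a0 * max (x - s) 0 with hψdef
    have hψc : Continuous ψ := by
      apply Continuous.add
      · exact hc.comp (continuous_id.min continuous_const)
      · exact continuous_const.mul ((continuous_id.sub continuous_const).max continuous_const)
    -- ψ on Iic s is φ, on Ici s is affine
    have hψle : ∀ x ≤ s, ψ x = φ x := by
      intro x hx
      simp only [hψdef, min_eq_left hx, max_eq_right (sub_nonpos.2 hx), mul_zero, add_zero]
    have hψge : ∀ x, s ≤ x → ψ x = φ s + a0 * (x - s) := by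
      intro x hx
      simp only [hψdef, min_eq_right hx, max_eq_left (sub_nonneg.2 hx)]
    have hS' : (S.erase s).card = n := by
      rw [Finset.card_erase_of_mem hsmem, hS]
      omega
    have hψhyp : ∀ I : Set ℝ, I.OrdConnected → (∀ x ∈ I, x ∉ S.erase s) →
        ∃ A C, ∀ x ∈ I, ψ x = A * x + C := by
      intro I hIoc hIS'
      by_cases hIl : ∃ x0 ∈ I, x0 < s
      · obtain ⟨x0, hx0I, hx0lt⟩ := hIl
        have hI1oc : (I ∩ Iio s).OrdConnected := hIoc.inter ordConnected_Iio
        have hI1S : ∀ x ∈ I ∩ Iio s, x ∉ S := by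
          rintro x ⟨hxI, hxlt⟩ hxS
          exact hIS' x hxI (Finset.mem_erase.2 ⟨ne_of_lt hxlt, hxS⟩)
        obtain ⟨a2, c2, h2⟩ := h (I ∩ Iio s) hI1oc hI1S
        -- if s ∈ I (or just accumulates from left), φ s = a2 s + c2
        have hlim : s ∈ I → φ s = a2 * s + c2 := by
          intro hsI
          have hIco : Ico x0 s ⊆ I ∩ Iio s := by
            rintro y ⟨hy1, hy2⟩
            exact ⟨hIoc.out hx0I hsI ⟨hy1, le_of_lt hy2⟩, hy2⟩
          have heq : EqOn φ (fun x => a2 * x + c2) (Ico x0 s) :=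
            fun y hy => h2 y (hIco hy)
          have := heq.closure hc ((continuous_const.mul continuous_id).add continuous_const)
          have hs : s ∈ closure (Ico x0 s) := by
            rw [closure_Ico (ne_of_lt hx0lt)]; exact ⟨le_of_lt hx0lt, le_refl s⟩
          exact this hs
        by_cases hIr : ∃ x1 ∈ I, s < x1
        · obtain ⟨x1, hx1I, hx1gt⟩ := hIr
          have hsI : s ∈ I := hIoc.out hx0I hx1I ⟨le_of_lt hx0lt, le_of_lt hx1gt⟩
          have hφs2 : φ s = a2 * s + c2 := hlim hsI
          -- a2 = a0 and c2 = c0 via two points in the overlap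
          have hw : max t x0 < s := max_lt ht hx0lt
          obtain ⟨u, hu1, hu2⟩ := exists_between hw
          obtain ⟨v, hv1, hv2⟩ := exists_between hu2
          have huI0 : u ∈ Ioo t s := ⟨lt_of_le_of_lt (le_max_left t x0) hu1, hu2⟩
          have hvI0 : v ∈ Ioo t s := ⟨lt_trans huI0.1 hv1, hv2⟩
          have huI1 : u ∈ I ∩ Iio s :=
            ⟨hIoc.out hx0I hsI ⟨le_of_lt (lt_of_le_of_lt (le_max_right t x0) hu1), le_of_lt hu2⟩, hu2⟩
          have hvI1 : v ∈ I ∩ Iio s :=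
            ⟨hIoc.out hx0I hsI ⟨le_of_lt (lt_of_le_of_lt (le_max_right t x0) (lt_trans hu1 hv1)), le_of_lt hv2⟩, hv2⟩
          obtain ⟨hA20, hC20⟩ := affine_eq_of_two (ne_of_lt hv1).symm
            ((h2 v hvI1).symm.trans (h0 v hvI0)) ((h2 u huI1).symm.trans (h0 u huI0))
          refine ⟨a2, c2, fun y hy => ?_⟩
          rcases lt_trichotomy y s with hys | hys | hys
          · rw [hψle y (le_of_lt hys)]; exact h2 y ⟨hy, hys⟩
          · rw [hys, hψle s (le_refl s)]; exact hφs2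
          · rw [hψge y (le_of_lt hys), hφs2, hA20]; ring
        · -- I ⊆ Iic s
          refine ⟨a2, c2, fun y hy => ?_⟩
          have hys : y ≤ s := not_lt.1 (fun hgt => hIr ⟨y, hy, hgt⟩)
          rcases lt_or_eq_of_le hys with hys' | hys'
          · rw [hψle y hys]; exact h2 y ⟨hy, hys'⟩
          · rw [hys', hψle s (le_refl s)]; exact hlim (hys' ▸ hy)
      · -- I ⊆ Ici s
        refine ⟨a0, φ s - a0 * s, fun y hy => ?_⟩
        have hys : s ≤ y := not_lt.1 (fun hlt => hIl ⟨y, hy, hlt⟩)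
        rw [hψge y hys]; ring
    obtain ⟨N, A, C, d, sN, hrep⟩ := ih (S.erase s) hS' ψ hψc hψhyp
    refine ⟨N + 1, A, C, Fin.cons (a1 - a0) d, Fin.cons s sN, fun x => ?_⟩
    have key : φ x = ψ x + (a1 - a0) * max (x - s) 0 := by
      rcases le_or_gt x s with hx | hx
      · rw [hψle x hx, max_eq_right (sub_nonpos.2 hx)]; ring
      · rw [hψge x (le_of_lt hx), max_eq_left (sub_nonneg.2 (le_of_lt hx)), h1 x hx, hclos1]
        ring
    rw [key, hrep x, Fin.sum_univ_succ]
    simp only [Fin.cons_zero, Fin.cons_succ]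
    ring

lemma repF_of_cpwl (φ : ℝ → ℝ) (hc : Continuous φ) (k : ℕ) (hp : PWL1 k φ) : RepF φ := by
  classical
  obtain ⟨P, hcov, haff⟩ := hp
  choose a c haff using haff
  have sel : ∀ x, ∃ i, φ x = a i * x + c i := fun x => by
    obtain ⟨i, hi⟩ := hcov x
    exact ⟨i, haff i x hi⟩
  -- crossing points
  set S : Finset ℝ := (Finset.univ : Finset (Fin k × Fin k)).biUnion
    (fun p => if a p.1 ≠ a p.2 then {(c p.2 - c p.1) / (a p.1 - a p.2)} else ∅) with hSdef
  have hcross : ∀ x, x ∉ (S : Finset ℝ) → ∀ i j, a i * x + c i = a j * x + c j →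
      a i = a j ∧ c i = c j := by
    intro x hx i j hij
    by_cases hija : a i = a j
    · exact ⟨hija, by rw [hija] at hij; linarith⟩
    · exfalso
      apply hx
      rw [hSdef]
      apply Finset.mem_biUnion.2
      refine ⟨(i, j), Finset.mem_univ _, ?_⟩
      rw [if_pos hija]
      simp only [Finset.mem_singleton]
      rw [eq_div_iff (sub_ne_zero.2 hija)]
      linarith
  exact rep_of S.card S rfl φ hc (fun I hIoc hIS =>
    sel_affine_on_preconnected a c φ hc sel I hIoc.isPreconnected
      (fun x hx => hcross x (hIS x hx)))

lemma rep_pad {N K : ℕ} (hNK : N ≤ K) (a c : ℝ) (d s : Fin N → ℝ) (φ : ℝ → ℝ)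
    (h : ∀ x, φ x = a * x + c + ∑ j, d j * max (x - s j) 0) :
    ∃ d' s' : Fin K → ℝ, ∀ x, φ x = a * x + c + ∑ j, d' j * max (x - s' j) 0 := by
  classical
  refine ⟨fun j => if h : (j : ℕ) < N then d ⟨j, h⟩ else 0,
          fun j => if h : (j : ℕ) < N then s ⟨j, h⟩ else 0, fun x => ?_⟩
  rw [h x]
  congr 1
  set F : ℕ → ℝ := fun i => if h : i < N then d ⟨i,h⟩ * max (x - s ⟨i,h⟩) 0 else 0 with hF
  calc ∑ j : Fin N, d j * max (x - s j) 0
      = ∑ j : Fin N, F ↑j := Finset.sum_congr rfl (fun j _ => by simp [hF, j.2])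
    _ = ∑ i ∈ Finset.range N, F i := Fin.sum_univ_eq_sum_range F N
    _ = ∑ i ∈ Finset.range K, F i := Finset.sum_subset (Finset.range_subset_range.2 hNK)
          (fun i _ hi => dif_neg (by simpa using hi))
    _ = ∑ j : Fin K, F ↑j := (Fin.sum_univ_eq_sum_range F K).symm
    _ = ∑ j : Fin K, (if h : (j:ℕ) < N then d ⟨j,h⟩ else 0) *
          max (x - (if h : (j:ℕ) < N then s ⟨j,h⟩ else 0)) 0 := by
        refine Finset.sum_congr rfl (fun j _ => ?_)
        by_cases hj : (j:ℕ) < N <;> simp [hF, hj]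

lemma relu_decomp (y : ℝ) : max y 0 - max (-y) 0 = y := by
  rcases le_total y 0 with h | h
  · rw [max_eq_right h, max_eq_left (neg_nonneg.2 h)]; ring
  · rw [max_eq_left h, max_eq_right (neg_nonpos.2 h)]; ring

lemma kan_layer_sandwich {n m : ℕ} (φ : Fin m → Fin n → ℝ → ℝ)
    (h : ∀ q p, RepF (φ q p)) :
    ∃ (N : ℕ) (W1 : Matrix (Fin N) (Fin n) ℝ) (b1 : Fin N → ℝ)
      (W2 : Matrix (Fin m) (Fin N) ℝ) (b2 : Fin m → ℝ),
      ∀ x, kanLayer φ x = W2.mulVec (reluV (W1.mulVec x + b1)) + b2 := by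
  classical
  choose Nf a c d0 s0 hrep using h
  set K : ℕ := Finset.univ.sup (fun qp : Fin m × Fin n => Nf qp.1 qp.2) with hK
  have hKle : ∀ q p, Nf q p ≤ K := fun q p =>
    Finset.le_sup (f := fun qp : Fin m × Fin n => Nf qp.1 qp.2) (Finset.mem_univ (q, p))
  have h' : ∀ q p, ∃ d' s' : Fin K → ℝ,
      ∀ x, φ q p x = a q p * x + c q p + ∑ j, d' j * max (x - s' j) 0 :=
    fun q p => rep_pad (hKle q p) _ _ _ _ _ (hrep q p)
  choose D Sp hD using h'
  let ι : Type := (Fin m × Fin n × Fin K) ⊕ (Fin n ⊕ Fin n)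
  let e : Fin (Fintype.card ι) ≃ ι := (Fintype.equivFin ι).symm
  let w1 : ι → Fin n → ℝ := fun i p' => match i with
    | .inl (_, p, _) => if p' = p then 1 else 0
    | .inr (.inl p) => if p' = p then 1 else 0
    | .inr (.inr p) => if p' = p then -1 else 0
  let β1 : ι → ℝ := fun i => match i with
    | .inl (q, p, j) => -(Sp q p j)
    | .inr _ => 0
  let w2 : ι → Fin m → ℝ := fun i q' => match i with
    | .inl (q, p, j) => if q = q' then D q p j else 0
    | .inr (.inl p) => a q' p
    | .inr (.inr p) => -(a q' p)
  refine ⟨Fintype.card ι, fun r p' => w1 (e r) p', fun r => β1 (e r),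
    fun q' r => w2 (e r) q', fun q' => ∑ p, c q' p, fun x => ?_⟩
  funext q'
  have hdot : ∀ i : ι, (∑ p', w1 i p' * x p') + β1 i = (match i with
    | .inl (q, p, j) => x p - Sp q p j
    | .inr (.inl p) => x p
    | .inr (.inr p) => -(x p) : ℝ) := by
    rintro (⟨q, p, j⟩ | p | p) <;>
      simp [w1, β1, ite_mul, Finset.sum_ite_eq', sub_eq_add_neg]
  have hRHS : (Matrix.mulVec (fun q' r => w2 (e r) q')
        (reluV (Matrix.mulVec (fun r p' => w1 (e r) p') x + fun r => β1 (e r)))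
        + fun q' => ∑ p, c q' p) q'
      = (∑ i : ι, w2 i q' * max ((∑ p', w1 i p' * x p') + β1 i) 0) + ∑ p, c q' p := by
    simp only [Pi.add_apply, Matrix.mulVec, dotProduct, reluV]
    congr 1
    exact Equiv.sum_comp e (fun i => w2 i q' * max ((∑ p', w1 i p' * x p') + β1 i) 0)
  rw [hRHS]
  have hsplit : (∑ i : ι, w2 i q' * max ((∑ p', w1 i p' * x p') + β1 i) 0)
      = (∑ p, ∑ j, D q' p j * max (x p - Sp q' p j) 0)
        + (∑ p, a q' p * max (x p) 0 + ∑ p, -(a q' p) * max (-(x p)) 0) := by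
    rw [Finset.sum_congr rfl (fun i _ => by rw [hdot i])]
    rw [Fintype.sum_sum_type, Fintype.sum_sum_type]
    congr 1
    rw [Fintype.sum_prod_type]
    have : ∀ q : Fin m, (∑ pj : Fin n × Fin K,
        w2 (.inl (q, pj.1, pj.2)) q' * max (x pj.1 - Sp q pj.1 pj.2) 0)
        = if q = q' then ∑ pj : Fin n × Fin K, D q pj.1 pj.2 * max (x pj.1 - Sp q pj.1 pj.2) 0 else 0 := by
      intro q
      by_cases hq : q = q' <;> simp [w2, hq]
    rw [Finset.sum_congr rfl (fun q _ => this q), Finset.sum_ite_eq' Finset.univ q']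
    simp only [Finset.mem_univ, if_true]
    rw [Fintype.sum_prod_type]
  rw [hsplit]
  have hL : kanLayer φ x q' = ∑ p, (a q' p * x p + c q' p
      + ∑ j, D q' p j * max (x p - Sp q' p j) 0) :=
    Finset.sum_congr rfl (fun p _ => hD q' p (x p))
  rw [hL, Finset.sum_add_distrib, Finset.sum_add_distrib]
  have hlin : ∑ p, a q' p * x p
      = ∑ p, a q' p * max (x p) 0 + ∑ p, -(a q' p) * max (-(x p)) 0 := by
    rw [← Finset.sum_add_distrib]
    exact Finset.sum_congr rfl (fun p _ => by
      linear_combination (a q' p) * (relu_decomp (x p)).symm)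
  rw [hlin]
  ring

lemma relunet_affine_post {n m l L : ℕ} {g : (Fin n → ℝ) → (Fin m → ℝ)}
    (hg : IsReLUNet n m g L) (W : Matrix (Fin l) (Fin m) ℝ) (b : Fin l → ℝ) :
    ∃ g' : (Fin n → ℝ) → (Fin l → ℝ),
      IsReLUNet n l g' L ∧ ∀ x, g' x = W.mulVec (g x) + b := by
  induction hg with
  | affine W0 b0 =>
    refine ⟨fun x => (W * W0).mulVec x + (W.mulVec b0 + b), IsReLUNet.affine _ _, fun x => ?_⟩
    rw [Matrix.mulVec_add, Matrix.mulVec_mulVec]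
    abel
  | @comp _ _ _ f0 hf W0 b0 ih =>
    refine ⟨fun x => (W * W0).mulVec (reluV (f0 x)) + (W.mulVec b0 + b),
      IsReLUNet.comp hf (W * W0) _, fun x => ?_⟩
    rw [Matrix.mulVec_add, Matrix.mulVec_mulVec]
    abel

lemma kan_to_relunet {n m L : ℕ} {f : (Fin n → ℝ) → (Fin m → ℝ)}
    (hf : IsKAN (fun φ => Continuous φ ∧ ∃ k, PWL1 k φ) n m f L) :
    ∃ (L' : ℕ) (g : (Fin n → ℝ) → (Fin m → ℝ)), IsReLUNet n m g L' ∧ ∀ x, f x = g x := by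
  induction hf with
  | layer φ h =>
    obtain ⟨N, W1, b1, W2, b2, hW⟩ := kan_layer_sandwich φ (fun q p => by
      obtain ⟨hc, k, hk⟩ := h q p
      exact repF_of_cpwl _ hc k hk)
    exact ⟨2, fun x => W2.mulVec (reluV (W1.mulVec x + b1)) + b2,
      IsReLUNet.comp (IsReLUNet.affine W1 b1) W2 b2, hW⟩
  | comp hf φ h ih =>
    obtain ⟨L', g, hg, hfg⟩ := ih
    obtain ⟨N, W1, b1, W2, b2, hW⟩ := kan_layer_sandwich φ (fun q p => by
      obtain ⟨hc, k, hk⟩ := h q p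
      exact repF_of_cpwl _ hc k hk)
    obtain ⟨g1, hg1, hg1eq⟩ := relunet_affine_post hg W1 b1
    refine ⟨L' + 1, fun x => W2.mulVec (reluV (g1 x)) + b2,
      IsReLUNet.comp hg1 W2 b2, fun x => ?_⟩
    simp only [hfg, hW, hg1eq]

/-- every piecewise linear KAN f : ℝⁿ → ℝ (all activation functions continuous
piecewise linear with finitely many pieces) equals some ReLU network. -/
theorem stmt8 (n : ℕ) (f : (Fin n → ℝ) → (Fin 1 → ℝ)) (L : ℕ)
    (hf : IsKAN (fun φ => Continuous φ ∧ ∃ k, PWL1 k φ) n 1 f L) :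
    ∃ (L' : ℕ) (g : (Fin n → ℝ) → (Fin 1 → ℝ)),
      IsReLUNet n 1 g L' ∧ ∀ x, f x = g x := by
  exact kan_to_relunet hf
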